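/- Suppose (a_{m,n})_{m<n} and (b_m) are bounded nonnegative double and single sequences with a_{m,n} ≤ b_m + b_n for all m < n, lim_m b_m exists, lim_m lim_n a_{m,n} exists, and lim_m lim_n a_{m,n} = 2 lim_m b_m. If a_{m,n} = ∑_{c} p_c a^c_{m,n} and b_m = ∑_c p_c b^c_m are countable sums with p_c > 0, ∑_c p_c M_c < ∞ where 0 ≤ a^c_{m,n} ≤ b^c_m + b^c_n ≤ M_c, and all iterated limits lim_m lim_n a^c_{m,n} and lim_m b^c_m exist, then for every c, lim_m lim_n a^c_{m,n} = 2 lim_m b^c_m. -/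

import Mathlib

open Filter

/-- Key exchange-of-limits argument from Lemma 2.2: equality in the aggregate
limit forces equality term by term. -/
theorem stmt_7 (p : ℕ → ℝ) (a : ℕ → ℕ → ℕ → ℝ) (b : ℕ → ℕ → ℝ) (M : ℕ → ℝ)
    (hp : ∀ c, 0 < p c)
    (hM : Summable (fun c => p c * M c))
    (hanonneg : ∀ c m n, m < n → 0 ≤ a c m n)
    (hsub : ∀ c m n, m < n → a c m n ≤ b c m + b c n)
    (hbnonneg : ∀ c m, 0 ≤ b c m)
    (hbM : ∀ c m n, b c m + b c n ≤ M c)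
    (la : ℕ → ℕ → ℝ) (La : ℕ → ℝ) (lb : ℕ → ℝ)
    (hla : ∀ c m, Tendsto (fun n => a c m n) atTop (nhds (la c m)))
    (hLa : ∀ c, Tendsto (fun m => la c m) atTop (nhds (La c)))
    (hlb : ∀ c, Tendsto (fun m => b c m) atTop (nhds (lb c)))
    (lA : ℕ → ℝ) (LA lB : ℝ)
    (hlA : ∀ m, Tendsto (fun n => ∑' c, p c * a c m n) atTop (nhds (lA m)))
    (hLA : Tendsto lA atTop (nhds LA))
    (hlB : Tendsto (fun m => ∑' c, p c * b c m) atTop (nhds lB))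
    (heq : LA = 2 * lB) :
    ∀ c, La c = 2 * lb c := by
  have hMnn : ∀ c, 0 ≤ M c := fun c =>
    le_trans (add_nonneg (hbnonneg c 0) (hbnonneg c 0)) (hbM c 0 0)
  have hbM' : ∀ c m, b c m ≤ M c := fun c m =>
    le_trans (le_add_of_nonneg_left (hbnonneg c m)) (hbM c m m)
  have haM : ∀ c m n, m < n → a c m n ≤ M c := fun c m n h =>
    le_trans (hsub c m n h) (hbM c m n)
  -- bounds on la
  have hla_nn : ∀ c m, 0 ≤ la c m := fun c m =>
    ge_of_tendsto (hla c m) (eventually_atTop.2 ⟨m+1, fun n hn => hanonneg c m n hn⟩)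
  have hla_M : ∀ c m, la c m ≤ M c := fun c m =>
    le_of_tendsto (hla c m) (eventually_atTop.2 ⟨m+1, fun n hn => haM c m n hn⟩)
  have hla_le : ∀ c m, la c m ≤ b c m + lb c := fun c m =>
    le_of_tendsto_of_tendsto (hla c m) (tendsto_const_nhds.add (hlb c))
      (eventually_atTop.2 ⟨m+1, fun n hn => hsub c m n hn⟩)
  -- bounds on lb, La
  have hlb_nn : ∀ c, 0 ≤ lb c := fun c =>
    ge_of_tendsto (hlb c) (Eventually.of_forall (hbnonneg c))
  have hlb_M : ∀ c, lb c ≤ M c := fun c =>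
    le_of_tendsto (hlb c) (Eventually.of_forall (hbM' c))
  have hLa_le : ∀ c, La c ≤ 2 * lb c := fun c => by
    have := le_of_tendsto_of_tendsto (hLa c) ((hlb c).add tendsto_const_nhds)
      (Eventually.of_forall (fun m => hla_le c m))
    linarith
  have hLa_M : ∀ c, La c ≤ M c := fun c =>
    le_of_tendsto (hLa c) (Eventually.of_forall (hla_M c))
  have hLa_nn : ∀ c, 0 ≤ La c := fun c =>
    ge_of_tendsto (hLa c) (Eventually.of_forall (hla_nn c))
  -- generic norm bound
  have hnb : ∀ c (x : ℝ), 0 ≤ x → x ≤ M c → ‖p c * x‖ ≤ p c * M c := fun c x h1 h2 => by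
    rw [Real.norm_eq_abs, abs_of_nonneg (mul_nonneg (hp c).le h1)]
    exact mul_le_mul_of_nonneg_left h2 (hp c).le
  -- step 1: lA m = ∑' c, p c * la c m
  have step1 : ∀ m, lA m = ∑' c, p c * la c m := fun m => by
    refine tendsto_nhds_unique (hlA m) ?_
    refine tendsto_tsum_of_dominated_convergence hM (fun c => (hla c m).const_mul _) ?_
    refine eventually_atTop.2 ⟨m+1, fun n hn c => ?_⟩
    exact hnb c _ (hanonneg c m n hn) (haM c m n hn)
  -- step 2: LA = ∑' c, p c * La c
  have step2 : LA = ∑' c, p c * La c := by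
    have hLA' : Tendsto (fun m => ∑' c, p c * la c m) atTop (nhds LA) := by
      simpa only [← step1] using hLA
    refine tendsto_nhds_unique hLA' ?_
    exact tendsto_tsum_of_dominated_convergence hM (fun c => (hLa c).const_mul _)
      (Eventually.of_forall (fun m c => hnb c _ (hla_nn c m) (hla_M c m)))
  -- step 3: lB = ∑' c, p c * lb c
  have step3 : lB = ∑' c, p c * lb c := by
    refine tendsto_nhds_unique hlB ?_
    exact tendsto_tsum_of_dominated_convergence hM (fun c => (hlb c).const_mul _)
      (Eventually.of_forall (fun m c => hnb c _ (hbnonneg c m) (hbM' c m)))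
  -- summability
  have sLa : Summable (fun c => p c * La c) :=
    hM.of_norm_bounded (fun c => hnb c _ (hLa_nn c) (hLa_M c))
  have slb : Summable (fun c => p c * lb c) :=
    hM.of_norm_bounded (fun c => hnb c _ (hlb_nn c) (hlb_M c))
  have sdiff : Summable (fun c => p c * (2 * lb c - La c)) := by
    have : Summable (fun c => 2 * (p c * lb c) - p c * La c) :=
      (slb.mul_left 2).sub sLa
    refine this.congr (fun c => by ring)
  have htsum : ∑' c, p c * (2 * lb c - La c) = 0 := by
    have : ∑' c, p c * (2 * lb c - La c) = ∑' c, (2 * (p c * lb c) - p c * La c) :=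
      tsum_congr (fun c => by ring)
    rw [this, Summable.tsum_sub (slb.mul_left 2) sLa, tsum_mul_left, ← step3, ← step2]
    linarith
  intro c
  have hnn : ∀ c, 0 ≤ p c * (2 * lb c - La c) := fun c =>
    mul_nonneg (hp c).le (by linarith [hLa_le c])
  have h0 : (fun c => p c * (2 * lb c - La c)) = 0 :=
    (hasSum_zero_iff_of_nonneg hnn).1 (htsum ▸ sdiff.hasSum)
  have hc := congrFun h0 c
  simp only [Pi.zero_apply] at hc
  have := mul_eq_zero.1 hc
  rcases this with h | h
  · exact absurd h (hp c).ne'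
  · linarith
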